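/- Lemma 2: Let p and q be two policies for the same finite-horizon MDP. For each time-step t let ε_t = KL(ρ_t^p ‖ ρ_t^q) be the Kullback–Leibler divergence between the state distributions of p and q at time t, and let δ_t = sup_{s∈S} |∫_A A_t^q(s,a) p_t(da|s)|, which is finite since the rewards are bounded. Assume ε_t < ∞ for all t. Then J(p) − J(q) ≥ Σ_{t=1}^T ∫_S ∫_A A_t^q(s,a) p_t(da|s) ρ_t^q(ds) − 2 Σ_{t=1}^T δ_t √(ε_t / 2). -/

import Mathlib

/-!
Performance difference lemma (Lemma 1) for finite-horizon MDPs.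

Time-steps are indexed `t = 0, …, T-1` (corresponding to `1, …, T` in the paper).
-/

open MeasureTheory ProbabilityTheory
open scoped ENNReal

noncomputable section

namespace MDP

variable {S A : Type*} [MeasurableSpace S] [MeasurableSpace A]

/-- The state distribution `ρ_t^π` of a policy `π` (at the 0-indexed time-step `t`):
`ρ_0^π = ρ₁` and `ρ_{t+1}^π` is the pushforward through the transition kernel `P`
of the joint state–action measure obtained by composing `ρ_t^π` with the kernel `π_t`. -/
noncomputable def stateDist (ρ₁ : Measure S) (P : Kernel (S × A) S)
    (π : ℕ → Kernel S A) : ℕ → Measure S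
  | 0 => ρ₁
  | (t + 1) =>
      Measure.bind (stateDist ρ₁ P π t) (fun s => Measure.bind (π t s) (fun a => P (s, a)))

/-- Auxiliary value functions, indexed by the number `k` of remaining time-steps:
`Vk P π r T k = V^π_{T-k}` (with the convention `V^π_T = 0`, i.e. `V^π_{T+1} = 0` in the
1-indexed notation of the paper). -/
noncomputable def Vk (P : Kernel (S × A) S) (π : ℕ → Kernel S A)
    (r : ℕ → S → A → ℝ) (T : ℕ) : ℕ → S → ℝ
  | 0 => fun _ => 0
  | (k + 1) => fun s =>
      ∫ a, (r (T - (k + 1)) s a + ∫ s', Vk P π r T k s' ∂(P (s, a))) ∂(π (T - (k + 1)) s)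

/-- The Q-function of policy `π` at (0-indexed) time-step `t`:
`Q_t^π(s,a) = r_t(s,a) + ∫ V_{t+1}^π(s') P(ds'|s,a)`. -/
noncomputable def Qfun (P : Kernel (S × A) S) (π : ℕ → Kernel S A)
    (r : ℕ → S → A → ℝ) (T : ℕ) (t : ℕ) (s : S) (a : A) : ℝ :=
  r t s a + ∫ s', Vk P π r T (T - (t + 1)) s' ∂(P (s, a))

/-- The V-function of policy `π` at (0-indexed) time-step `t`. -/
noncomputable def Vfun (P : Kernel (S × A) S) (π : ℕ → Kernel S A)
    (r : ℕ → S → A → ℝ) (T : ℕ) (t : ℕ) (s : S) : ℝ :=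
  Vk P π r T (T - t) s

/-- The advantage function `A_t^π(s,a) = Q_t^π(s,a) − V_t^π(s)`. -/
noncomputable def Adv (P : Kernel (S × A) S) (π : ℕ → Kernel S A)
    (r : ℕ → S → A → ℝ) (T : ℕ) (t : ℕ) (s : S) (a : A) : ℝ :=
  Qfun P π r T t s a - Vfun P π r T t s

/-- The policy return `J(π) = Σ_{t=0}^{T-1} ∫_S ∫_A r_t(s,a) π_t(da|s) ρ_t^π(ds)`. -/
noncomputable def policyReturn (ρ₁ : Measure S) (P : Kernel (S × A) S)
    (r : ℕ → S → A → ℝ) (T : ℕ) (π : ℕ → Kernel S A) : ℝ :=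
  ∑ t ∈ Finset.range T, ∫ s, ∫ a, r t s a ∂(π t s) ∂(stateDist ρ₁ P π t)


/-- The Kullback–Leibler divergence `KL(μ‖ν) = ∫ log (dμ/dν) dμ`, with value `∞` when `μ` is not
absolutely continuous w.r.t. `ν` (or the log-likelihood ratio is not integrable). -/
noncomputable def klDiv {X : Type*} [MeasurableSpace X] (μ ν : Measure X) : ℝ≥0∞ :=
  haveI := Classical.propDecidable (μ ≪ ν ∧ Integrable (llr μ ν) μ)
  if μ ≪ ν ∧ Integrable (llr μ ν) μ then ENNReal.ofReal (∫ x, llr μ ν x ∂μ) else ⊤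


/-! ### Auxiliary lemmas: scalar inequality for Pinsker -/

lemma log_ge_one_sub_inv {x : ℝ} (hx : 0 < x) : 1 - x⁻¹ ≤ Real.log x := by
  have h := Real.log_le_sub_one_of_pos (inv_pos.mpr hx)
  rw [Real.log_inv] at h; linarith

noncomputable def Fpin (x : ℝ) : ℝ := (2*x+4)*(x*Real.log x - x + 1) - 3*(x-1)^2
noncomputable def Gpin (x : ℝ) : ℝ := 4*(x+1)*Real.log x - 8*x + 8

lemma hasDerivAt_Gpin {x : ℝ} (hx : 0 < x) :
    HasDerivAt Gpin (4*Real.log x + 4/x - 4) x := by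
  have hlog : HasDerivAt Real.log x⁻¹ x := Real.hasDerivAt_log hx.ne'
  have h1 : HasDerivAt (fun y : ℝ => 4*(y+1)) 4 x := by
    simpa using ((hasDerivAt_id x).add_const 1).const_mul (4:ℝ)
  have h2 := ((h1.mul hlog).sub ((hasDerivAt_id x).const_mul (8:ℝ))).add_const (8:ℝ)
  have hG : Gpin = fun y => 4*(y+1)*Real.log y - 8*y + 8 := rfl
  rw [hG]
  refine h2.congr_deriv ?_
  field_simp
  ring

lemma hasDerivAt_Fpin {x : ℝ} (hx : 0 < x) :
    HasDerivAt Fpin (Gpin x) x := by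
  have hml : HasDerivAt (fun y : ℝ => y * Real.log y) (Real.log x + 1) x :=
    Real.hasDerivAt_mul_log hx.ne'
  have h1 : HasDerivAt (fun y : ℝ => 2*y+4) 2 x := by
    simpa using ((hasDerivAt_id x).const_mul (2:ℝ)).add_const (4:ℝ)
  have h2 : HasDerivAt (fun y : ℝ => y * Real.log y - y + 1) (Real.log x + 1 - 1) x :=
    (hml.sub (hasDerivAt_id x)).add_const 1
  have h3 : HasDerivAt (fun y : ℝ => 3*(y-1)^2) (3*(2*(x-1))) x := by
    simpa using (((hasDerivAt_id x).sub_const 1).pow 2).const_mul (3:ℝ)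
  have h4 := (h1.mul h2).sub h3
  have hF : Fpin = fun y => (2*y+4)*(y*Real.log y - y + 1) - 3*(y-1)^2 := rfl
  rw [hF]
  refine h4.congr_deriv ?_
  simp only [Gpin]
  ring

lemma Gpin_mono : MonotoneOn Gpin (Set.Ioi (0:ℝ)) := by
  refine monotoneOn_of_deriv_nonneg (convex_Ioi 0) ?_ ?_ ?_
  · exact fun y hy => (hasDerivAt_Gpin hy).continuousAt.continuousWithinAt
  · rw [interior_Ioi]
    exact fun y hy => (hasDerivAt_Gpin hy).differentiableAt.differentiableWithinAt
  · rw [interior_Ioi]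
    intro y hy
    rw [(hasDerivAt_Gpin hy).deriv]
    have h := log_ge_one_sub_inv hy
    have : 4/y = 4 * y⁻¹ := by ring
    nlinarith

lemma Gpin_one : Gpin 1 = 0 := by simp [Gpin]

lemma Fpin_one : Fpin 1 = 0 := by simp [Fpin]

lemma Fpin_nonneg {x : ℝ} (hx : 0 ≤ x) : 0 ≤ Fpin x := by
  rcases hx.eq_or_lt with h | hx
  · simp [Fpin, ← h]; norm_num
  rcases le_or_gt 1 x with h1 | h1
  · have hmono : MonotoneOn Fpin (Set.Ici (1:ℝ)) := by
      refine monotoneOn_of_deriv_nonneg (convex_Ici 1) ?_ ?_ ?_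
      · exact fun y hy =>
          (hasDerivAt_Fpin (lt_of_lt_of_le one_pos hy)).continuousAt.continuousWithinAt
      · rw [interior_Ici]
        exact fun y hy =>
          (hasDerivAt_Fpin (lt_trans one_pos hy)).differentiableAt.differentiableWithinAt
      · rw [interior_Ici]
        intro y hy
        rw [(hasDerivAt_Fpin (lt_trans one_pos hy)).deriv]
        have := Gpin_mono (Set.mem_Ioi.mpr one_pos)
          (Set.mem_Ioi.mpr (lt_trans one_pos hy)) (le_of_lt hy)
        rw [Gpin_one] at this; exact this
    have := hmono (Set.mem_Ici.mpr le_rfl) (Set.mem_Ici.mpr h1) h1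
    rwa [Fpin_one] at this
  · have hanti : AntitoneOn Fpin (Set.Icc x 1) := by
      refine antitoneOn_of_deriv_nonpos (convex_Icc x 1) ?_ ?_ ?_
      · intro y hy
        exact (hasDerivAt_Fpin (lt_of_lt_of_le hx hy.1)).continuousAt.continuousWithinAt
      · intro y hy
        rw [interior_Icc] at hy
        exact (hasDerivAt_Fpin (lt_trans hx hy.1)).differentiableAt.differentiableWithinAt
      · intro y hy
        rw [interior_Icc] at hy
        rw [(hasDerivAt_Fpin (lt_trans hx hy.1)).deriv]
        have := Gpin_mono (Set.mem_Ioi.mpr (lt_trans hx hy.1))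
          (Set.mem_Ioi.mpr one_pos) (le_of_lt hy.2)
        rw [Gpin_one] at this; exact this
    have := hanti (Set.mem_Icc.mpr ⟨le_rfl, le_of_lt h1⟩)
      (Set.mem_Icc.mpr ⟨le_of_lt h1, le_rfl⟩) (le_of_lt h1)
    rwa [Fpin_one] at this

lemma phi_nonneg' {x : ℝ} (hx : 0 ≤ x) : 0 ≤ x * Real.log x - x + 1 := by
  have hF := Fpin_nonneg hx
  simp only [Fpin] at hF
  nlinarith [sq_nonneg (x-1)]

lemma key_ineq' {x : ℝ} (hx : 0 ≤ x) :
    3*(x-1)^2 ≤ (2*x+4)*(x*Real.log x - x + 1) := by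
  have hF := Fpin_nonneg hx
  simp only [Fpin] at hF
  linarith

/-! ### Pinsker-type inequality -/

section PinskerSec

variable {X : Type*} [MeasurableSpace X]

lemma integrable_of_bdd {m : Measure X} [IsFiniteMeasure m] {f : X → ℝ} {C : ℝ}
    (hf : AEStronglyMeasurable f m) (hC : ∀ y, |f y| ≤ C) : Integrable f m :=
  Integrable.mono' (integrable_const C) hf (ae_of_all _ (by simpa [Real.norm_eq_abs] using hC))

lemma pinsker_core (μ ν : Measure X) [IsProbabilityMeasure μ] [IsProbabilityMeasure ν]
    (h : μ ≪ ν) (hint : Integrable (llr μ ν) μ) :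
    0 ≤ ∫ x, llr μ ν x ∂μ ∧
    ∫ x, |(μ.rnDeriv ν x).toReal - 1| ∂ν ≤ Real.sqrt (2 * ∫ x, llr μ ν x ∂μ) := by
  set g : X → ℝ := fun x => (μ.rnDeriv ν x).toReal with hg
  have hgm : Measurable g := (Measure.measurable_rnDeriv μ ν).ennreal_toReal
  have hgnn : ∀ x, 0 ≤ g x := fun x => ENNReal.toReal_nonneg
  have hgint : Integrable g ν := Measure.integrable_toReal_rnDeriv
  have hg1 : ∫ x, g x ∂ν = 1 := by
    rw [hg]; rw [Measure.integral_toReal_rnDeriv h]; simp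
  have hKL : ∫ x, llr μ ν x ∂μ = ∫ x, g x * Real.log (g x) ∂ν := by
    rw [← integral_rnDeriv_smul h (f := llr μ ν)]
    simp_rw [llr_def, smul_eq_mul]
    rfl
  have hglg_int : Integrable (fun x => g x * Real.log (g x)) ν := by
    have := (integrable_rnDeriv_smul_iff h).mpr hint
    simp_rw [llr_def, smul_eq_mul] at this
    exact this
  set φ : X → ℝ := fun x => g x * Real.log (g x) - g x + 1 with hφ
  have hsub_int : Integrable (fun x => g x * Real.log (g x) - g x) ν := hglg_int.sub hgint
  have hφint : Integrable φ ν := hsub_int.add (integrable_const 1)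
  have hφnn : ∀ x, 0 ≤ φ x := fun x => phi_nonneg' (hgnn x)
  have hKφ : ∫ x, φ x ∂ν = ∫ x, llr μ ν x ∂μ := by
    rw [hKL, hφ]
    rw [integral_add hsub_int (integrable_const 1), integral_sub hglg_int hgint, hg1]
    simp
  have hK0 : 0 ≤ ∫ x, llr μ ν x ∂μ := by
    rw [← hKφ]; exact integral_nonneg hφnn
  refine ⟨hK0, ?_⟩
  set K := ∫ x, llr μ ν x ∂μ
  set b : X → ℝ := fun x => Real.sqrt ((2 * g x + 4)/3) with hbdef
  set a : X → ℝ := fun x => |g x - 1| / b x with hadef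
  have hwpos : ∀ x, 0 < (2 * g x + 4)/3 := fun x => by have := hgnn x; positivity
  have hbpos : ∀ x, 0 < b x := fun x => Real.sqrt_pos.mpr (hwpos x)
  have hb2 : ∀ x, b x ^ 2 = (2 * g x + 4)/3 := fun x => Real.sq_sqrt (hwpos x).le
  have hann : ∀ x, 0 ≤ a x := fun x => div_nonneg (abs_nonneg _) (hbpos x).le
  have hab : ∀ x, a x * b x = |g x - 1| := fun x => div_mul_cancel₀ _ (hbpos x).ne'
  have ha2le : ∀ x, a x ^ 2 ≤ φ x := by
    intro x
    have h2 : a x ^ 2 = (g x - 1)^2 / ((2 * g x + 4)/3) := by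
      rw [hadef]; rw [div_pow, hb2 x, sq_abs]
    simp only [hφ]
    rw [h2, div_le_iff₀ (hwpos x)]
    nlinarith [key_ineq' (hgnn x)]
  have ham : Measurable a := by
    have : Measurable b := (hgm.const_mul 2).add_const 4 |>.div_const 3 |>.sqrt
    exact ((hgm.sub measurable_const).abs).div this
  have hbm : Measurable b := (hgm.const_mul 2).add_const 4 |>.div_const 3 |>.sqrt
  have huint : Integrable (fun x => |g x - 1|) ν := (hgint.sub (integrable_const 1)).abs
  have hunn : ∀ x, (0:ℝ) ≤ |g x - 1| := fun x => abs_nonneg _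
  have hwint : Integrable (fun x => (2 * g x + 4)/3) ν :=
    (((hgint.const_mul 2).add (integrable_const 4)).div_const 3)
  have hwgint : ∫ x, (2 * g x + 4)/3 ∂ν = 2 := by
    simp_rw [div_eq_mul_inv]
    rw [integral_mul_const, integral_add ((hgint.const_mul 2)) (integrable_const 4),
      integral_const_mul, hg1]
    simp; norm_num
  have hCS := ENNReal.lintegral_mul_le_Lp_mul_Lq ν
    (Real.HolderConjugate.two_two)
    (f := fun x => ENNReal.ofReal (a x)) (g := fun x => ENNReal.ofReal (b x))
    (ham.ennreal_ofReal.aemeasurable) (hbm.ennreal_ofReal.aemeasurable)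
  have hL : ∫⁻ x, ((fun x => ENNReal.ofReal (a x)) * (fun x => ENNReal.ofReal (b x))) x ∂ν
      = ENNReal.ofReal (∫ x, |g x - 1| ∂ν) := by
    rw [ofReal_integral_eq_lintegral_ofReal huint (ae_of_all _ hunn)]
    congr 1
    funext x
    simp only [Pi.mul_apply]
    rw [← ENNReal.ofReal_mul (hann x), hab x]
  have hpow : ∀ (c : X → ℝ), (∀ x, 0 ≤ c x) →
      ∀ x, ENNReal.ofReal (c x) ^ (2:ℝ) = ENNReal.ofReal (c x ^ 2) := by
    intro c hc x
    rw [show (2:ℝ) = ((2:ℕ):ℝ) by norm_num, ENNReal.rpow_natCast,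
      ENNReal.ofReal_pow (hc x)]
  have hR1 : ∫⁻ x, ENNReal.ofReal (a x) ^ (2:ℝ) ∂ν ≤ ENNReal.ofReal K := by
    calc ∫⁻ x, ENNReal.ofReal (a x) ^ (2:ℝ) ∂ν
        = ∫⁻ x, ENNReal.ofReal (a x ^ 2) ∂ν := by
          congr 1; funext x; exact hpow a hann x
      _ ≤ ∫⁻ x, ENNReal.ofReal (φ x) ∂ν :=
          lintegral_mono fun x => ENNReal.ofReal_le_ofReal (ha2le x)
      _ = ENNReal.ofReal (∫ x, φ x ∂ν) :=
          (ofReal_integral_eq_lintegral_ofReal hφint (ae_of_all _ hφnn)).symm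
      _ = ENNReal.ofReal K := by rw [hKφ]
  have hR2 : ∫⁻ x, ENNReal.ofReal (b x) ^ (2:ℝ) ∂ν = ENNReal.ofReal 2 := by
    calc ∫⁻ x, ENNReal.ofReal (b x) ^ (2:ℝ) ∂ν
        = ∫⁻ x, ENNReal.ofReal ((2 * g x + 4)/3) ∂ν := by
          congr 1; funext x; rw [hpow b (fun x => (hbpos x).le) x, hb2 x]
      _ = ENNReal.ofReal (∫ x, (2 * g x + 4)/3 ∂ν) :=
          (ofReal_integral_eq_lintegral_ofReal hwint (ae_of_all _ fun x => (hwpos x).le)).symm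
      _ = ENNReal.ofReal 2 := by rw [hwgint]
  have hCS' : ∫⁻ x, ENNReal.ofReal (a x) * ENNReal.ofReal (b x) ∂ν
      ≤ (∫⁻ x, ENNReal.ofReal (a x) ^ (2:ℝ) ∂ν) ^ ((1:ℝ)/2)
        * (∫⁻ x, ENNReal.ofReal (b x) ^ (2:ℝ) ∂ν) ^ ((1:ℝ)/2) := hCS
  have hL' : ∫⁻ x, ENNReal.ofReal (a x) * ENNReal.ofReal (b x) ∂ν
      = ENNReal.ofReal (∫ x, |g x - 1| ∂ν) := hL
  have hfinal : ENNReal.ofReal (∫ x, |g x - 1| ∂ν)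
      ≤ (ENNReal.ofReal K) ^ ((1:ℝ)/2) * (ENNReal.ofReal 2) ^ ((1:ℝ)/2) := by
    rw [← hL']
    exact hCS'.trans (mul_le_mul' (ENNReal.rpow_le_rpow hR1 (by norm_num))
      (ENNReal.rpow_le_rpow hR2.le (by norm_num)))
  have hne : (ENNReal.ofReal K) ^ ((1:ℝ)/2) * (ENNReal.ofReal 2) ^ ((1:ℝ)/2) ≠ ⊤ :=
    ENNReal.mul_ne_top (ENNReal.rpow_ne_top_of_nonneg (by norm_num) ENNReal.ofReal_ne_top)
      (ENNReal.rpow_ne_top_of_nonneg (by norm_num) ENNReal.ofReal_ne_top)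
  have hmain := ENNReal.toReal_mono hne hfinal
  rw [ENNReal.toReal_ofReal (integral_nonneg hunn)] at hmain
  rw [ENNReal.toReal_mul, ← ENNReal.toReal_rpow, ← ENNReal.toReal_rpow,
    ENNReal.toReal_ofReal hK0, ENNReal.toReal_ofReal (by norm_num : (0:ℝ) ≤ 2)] at hmain
  refine hmain.trans (le_of_eq ?_)
  rw [← Real.sqrt_eq_rpow, ← Real.sqrt_eq_rpow, ← Real.sqrt_mul hK0, mul_comm K 2]

lemma abs_integral_sub_le (μ ν : Measure X) [IsProbabilityMeasure μ] [IsProbabilityMeasure ν]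
    (h : μ ≪ ν) (hint : Integrable (llr μ ν) μ)
    {f : X → ℝ} (hf : Measurable f) {δ : ℝ} (hδ : ∀ x, |f x| ≤ δ) (hδ0 : 0 ≤ δ) :
    |(∫ x, f x ∂μ) - ∫ x, f x ∂ν| ≤ δ * Real.sqrt (2 * ∫ x, llr μ ν x ∂μ) := by
  set g : X → ℝ := fun x => (μ.rnDeriv ν x).toReal with hg
  have hgm : Measurable g := (Measure.measurable_rnDeriv μ ν).ennreal_toReal
  have hgint : Integrable g ν := Measure.integrable_toReal_rnDeriv
  have hfμ : Integrable f μ := integrable_of_bdd hf.aestronglyMeasurable hδ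
  have hfν : Integrable f ν := integrable_of_bdd hf.aestronglyMeasurable hδ
  have hgf : Integrable (fun x => g x * f x) ν := by
    have := (integrable_rnDeriv_smul_iff h).mpr hfμ
    simp_rw [smul_eq_mul] at this
    exact this
  have h1 : ∫ x, f x ∂μ = ∫ x, g x * f x ∂ν := by
    rw [← integral_rnDeriv_smul h (f := f)]
    simp_rw [smul_eq_mul]
    rfl
  have hprod : Integrable (fun x => (g x - 1) * f x) ν := by
    have heq : (fun x => (g x - 1) * f x) = fun x => g x * f x - f x := by
      funext x; ring
    rw [heq]; exact hgf.sub hfν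
  have h2 : (∫ x, f x ∂μ) - ∫ x, f x ∂ν = ∫ x, (g x - 1) * f x ∂ν := by
    rw [h1, ← integral_sub hgf hfν]
    congr 1; funext x; ring
  rw [h2]
  have huint : Integrable (fun x => |g x - 1|) ν := (hgint.sub (integrable_const 1)).abs
  have hprodabs : Integrable (fun x => |g x - 1| * |f x|) ν := by
    have := hprod.abs
    simp_rw [abs_mul] at this
    exact this
  have h3 : |∫ x, (g x - 1) * f x ∂ν| ≤ ∫ x, |g x - 1| * δ ∂ν := by
    have h0 : |∫ x, (g x - 1) * f x ∂ν| ≤ ∫ x, |g x - 1| * |f x| ∂ν := by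
      simpa [Real.norm_eq_abs, abs_mul] using
        norm_integral_le_integral_norm (μ := ν) (fun x => (g x - 1) * f x)
    exact h0.trans (integral_mono hprodabs (huint.mul_const δ) fun x =>
      mul_le_mul_of_nonneg_left (hδ x) (abs_nonneg _))
  have h4 : ∫ x, |g x - 1| * δ ∂ν = δ * ∫ x, |g x - 1| ∂ν := by
    rw [integral_mul_const]; ring
  refine h3.trans ?_
  rw [h4]
  exact mul_le_mul_of_nonneg_left (pinsker_core μ ν h hint).2 hδ0

end PinskerSec

/-! ### MDP auxiliary lemmas -/

lemma integral_bind_bdd {Y Z : Type*} [MeasurableSpace Y] [MeasurableSpace Z]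
    {m : Measure Y} [IsFiniteMeasure m] {κ : Y → Measure Z} (hκ : Measurable κ)
    (hκp : ∀ y, IsProbabilityMeasure (κ y))
    {f : Z → ℝ} (hf : Measurable f) {C : ℝ} (hC : ∀ z, |f z| ≤ C) :
    ∫ z, f z ∂(m.bind κ) = ∫ y, ∫ z, f z ∂(κ y) ∂m := by
  rcases isEmpty_or_nonempty Z with hZ | hZ
  · have h1 : m.bind κ = 0 := Subsingleton.elim _ _
    have h2 : ∀ y, κ y = 0 := fun y => Subsingleton.elim _ _
    simp [h1, h2]
  have hC0 : 0 ≤ C := le_trans (abs_nonneg _) (hC (Classical.arbitrary Z))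
  haveI : IsFiniteMeasure (m.bind κ) := by
    constructor
    rw [Measure.bind_apply MeasurableSet.univ hκ.aemeasurable]
    calc ∫⁻ y, (κ y) Set.univ ∂m = ∫⁻ _, 1 ∂m := by
          apply lintegral_congr; intro y; rw [measure_univ]
      _ = m Set.univ := by simp
      _ < ⊤ := measure_lt_top m _
  have hfbi : Integrable f (m.bind κ) := integrable_of_bdd hf.aestronglyMeasurable hC
  set L1 : Y → ℝ≥0∞ := fun y => ∫⁻ z, ENNReal.ofReal (f z) ∂(κ y) with hL1def
  set L2 : Y → ℝ≥0∞ := fun y => ∫⁻ z, ENNReal.ofReal (-f z) ∂(κ y) with hL2def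
  have hL1m : Measurable L1 :=
    (Measure.measurable_lintegral hf.ennreal_ofReal).comp hκ
  have hL2m : Measurable L2 :=
    (Measure.measurable_lintegral hf.neg.ennreal_ofReal).comp hκ
  have hbd : ∀ (z : Z), ENNReal.ofReal (f z) ≤ ENNReal.ofReal C := fun z =>
    ENNReal.ofReal_le_ofReal (le_trans (le_abs_self _) (hC z))
  have hbd' : ∀ (z : Z), ENNReal.ofReal (-f z) ≤ ENNReal.ofReal C := fun z =>
    ENNReal.ofReal_le_ofReal (le_trans (neg_le_abs _) (hC z))
  have hL1le : ∀ y, L1 y ≤ ENNReal.ofReal C := by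
    intro y
    calc L1 y ≤ ∫⁻ _, ENNReal.ofReal C ∂(κ y) := lintegral_mono fun z => hbd z
      _ = ENNReal.ofReal C := by rw [lintegral_const, measure_univ, mul_one]
  have hL2le : ∀ y, L2 y ≤ ENNReal.ofReal C := by
    intro y
    calc L2 y ≤ ∫⁻ _, ENNReal.ofReal C ∂(κ y) := lintegral_mono fun z => hbd' z
      _ = ENNReal.ofReal C := by rw [lintegral_const, measure_univ, mul_one]
  have htoRle : ∀ (L : Y → ℝ≥0∞), (∀ y, L y ≤ ENNReal.ofReal C) → Measurable L →
      Integrable (fun y => (L y).toReal) m ∧ ∀ y, |(L y).toReal| ≤ C := by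
    intro L hLle hLm
    have hb : ∀ y, |(L y).toReal| ≤ C := by
      intro y
      rw [abs_of_nonneg ENNReal.toReal_nonneg]
      calc (L y).toReal ≤ (ENNReal.ofReal C).toReal :=
            ENNReal.toReal_mono ENNReal.ofReal_ne_top (hLle y)
        _ = C := ENNReal.toReal_ofReal hC0
    exact ⟨integrable_of_bdd hLm.ennreal_toReal.aestronglyMeasurable hb, hb⟩
  have hint1 := htoRle L1 hL1le hL1m
  have hint2 := htoRle L2 hL2le hL2m
  have hRHS : ∫ y, ∫ z, f z ∂(κ y) ∂m = ∫ y, ((L1 y).toReal - (L2 y).toReal) ∂m := by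
    apply integral_congr_ae
    apply ae_of_all
    intro y
    exact integral_eq_lintegral_pos_part_sub_lintegral_neg_part
      (integrable_of_bdd hf.aestronglyMeasurable hC)
  rw [hRHS, integral_sub hint1.1 hint2.1,
    integral_toReal hL1m.aemeasurable
      (ae_of_all _ fun y => lt_of_le_of_lt (hL1le y) ENNReal.ofReal_lt_top),
    integral_toReal hL2m.aemeasurable
      (ae_of_all _ fun y => lt_of_le_of_lt (hL2le y) ENNReal.ofReal_lt_top),
    integral_eq_lintegral_pos_part_sub_lintegral_neg_part hfbi,
    Measure.lintegral_bind hκ.aemeasurable hf.ennreal_ofReal.aemeasurable,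
    Measure.lintegral_bind (f := fun a => ENNReal.ofReal (-f a)) hκ.aemeasurable
      hf.neg.ennreal_ofReal.aemeasurable]

section MDPSec

variable (P : Kernel (S × A) S) [IsMarkovKernel P]

lemma meas_integral_kernel {κ : Kernel S A} [IsSFiniteKernel κ] {F : S → A → ℝ}
    (hF : Measurable (Function.uncurry F)) :
    Measurable fun s => ∫ a, F s a ∂(κ s) :=
  (StronglyMeasurable.integral_kernel_prod_right' (hF.stronglyMeasurable)).measurable

lemma meas_integral_P {V : S → ℝ} (hV : Measurable V) :
    Measurable fun sa : S × A => ∫ s', V s' ∂(P sa) :=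
  (StronglyMeasurable.integral_kernel_prod_right' (κ := P)
    ((hV.comp measurable_snd).stronglyMeasurable)).measurable

variable (π : ℕ → Kernel S A) [∀ t, IsMarkovKernel (π t)]

/-- The one-step state transition kernel of policy `π` at time `t`. -/
noncomputable def stepK (t : ℕ) : Kernel S S := P ∘ₖ (Kernel.id ×ₖ π t)

instance (t : ℕ) : IsMarkovKernel (stepK P π t) := by unfold stepK; infer_instance

lemma stepK_apply (t : ℕ) (s : S) :
    stepK P π t s = Measure.bind (π t s) (fun a => P (s, a)) := by
  rw [stepK, Kernel.comp_apply, Kernel.prod_apply, Kernel.id_apply, Measure.dirac_prod]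
  show ((((π t) s).map (Prod.mk s)).map ⇑P).join = _
  rw [Measure.map_map P.measurable measurable_prodMk_left]
  rfl

lemma stateDist_succ (ρ₁ : Measure S) (t : ℕ) :
    stateDist ρ₁ P π (t+1) = (stateDist ρ₁ P π t).bind (stepK P π t) := by
  show Measure.bind _ _ = _
  congr 1
  funext s
  exact (stepK_apply P π t s).symm

lemma isProb_stateDist (ρ₁ : Measure S) [IsProbabilityMeasure ρ₁] :
    ∀ t, IsProbabilityMeasure (stateDist ρ₁ P π t) := by
  intro t
  induction t with
  | zero => exact inferInstanceAs (IsProbabilityMeasure ρ₁)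
  | succ t ih =>
    rw [stateDist_succ]
    constructor
    rw [Measure.bind_apply MeasurableSet.univ (Kernel.measurable _).aemeasurable]
    calc ∫⁻ s, (stepK P π t s) Set.univ ∂(stateDist ρ₁ P π t)
        = ∫⁻ _, 1 ∂(stateDist ρ₁ P π t) := by
          apply lintegral_congr; intro s; rw [measure_univ]
      _ = 1 := by rw [lintegral_one, measure_univ]

variable {r : ℕ → S → A → ℝ} {T : ℕ} {D : ℝ}

lemma Vk_measurable (hmr : ∀ t, Measurable (Function.uncurry (r t))) :
    ∀ k, Measurable (Vk P π r T k) := by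
  intro k
  induction k with
  | zero => exact measurable_const
  | succ k ih =>
    have hin : Measurable fun sa : S × A => ∫ s', Vk P π r T k s' ∂(P sa) :=
      meas_integral_P P ih
    have hF : Measurable (Function.uncurry
        (fun s a => r (T - (k+1)) s a + ∫ s', Vk P π r T k s' ∂(P (s, a)))) :=
      (hmr _).add hin
    exact meas_integral_kernel (κ := π (T - (k+1))) hF

lemma Vk_abs_le (hrD : ∀ t, t ≤ T → ∀ s a, |r t s a| ≤ D) (hD0 : 0 ≤ D) :
    ∀ k, ∀ s, |Vk P π r T k s| ≤ k * D := by
  intro k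
  induction k with
  | zero => intro s; simp [Vk]
  | succ k ih =>
    intro s
    have hinner : ∀ a, |r (T - (k+1)) s a + ∫ s', Vk P π r T k s' ∂(P (s, a))| ≤ D + k * D := by
      intro a
      refine (abs_add_le _ _).trans (add_le_add (hrD _ (Nat.sub_le T (k+1)) s a) ?_)
      have := norm_integral_le_of_norm_le_const (μ := P (s, a))
        (f := fun s' => Vk P π r T k s')
        (ae_of_all _ fun s' => by simpa [Real.norm_eq_abs] using ih s')
      simpa [Real.norm_eq_abs, measure_univ] using this
    have hout := norm_integral_le_of_norm_le_const (μ := (π (T - (k+1))) s)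
      (f := fun a => r (T - (k+1)) s a + ∫ s', Vk P π r T k s' ∂(P (s, a)))
      (ae_of_all _ fun a => by simpa [Real.norm_eq_abs] using hinner a)
    have : |Vk P π r T (k+1) s| ≤ (D + k * D) * 1 := by
      simpa [Real.norm_eq_abs, measure_univ, Vk] using hout
    calc |Vk P π r T (k+1) s| ≤ (D + k * D) * 1 := this
      _ = (↑(k+1) : ℝ) * D := by push_cast; ring
      _ = (k+1 : ℕ) * D := by norm_cast

lemma Vfun_measurable (hmr : ∀ t, Measurable (Function.uncurry (r t))) (t : ℕ) :
    Measurable (Vfun P π r T t) := Vk_measurable P π hmr _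

lemma Vfun_abs_le (hrD : ∀ t, t ≤ T → ∀ s a, |r t s a| ≤ D) (hD0 : 0 ≤ D)
    (t : ℕ) (s : S) : |Vfun P π r T t s| ≤ T * D := by
  refine (Vk_abs_le P π hrD hD0 (T - t) s).trans ?_
  have : ((T - t : ℕ) : ℝ) ≤ (T : ℝ) := by
    exact_mod_cast Nat.sub_le T t
  nlinarith

lemma Adv_measurable (hmr : ∀ t, Measurable (Function.uncurry (r t))) (t : ℕ) :
    Measurable (Function.uncurry (Adv P π r T t)) := by
  have hin : Measurable fun sa : S × A => ∫ s', Vk P π r T (T - (t+1)) s' ∂(P sa) :=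
    meas_integral_P P (Vk_measurable P π hmr _)
  exact ((hmr t).add hin).sub ((Vk_measurable P π hmr (T - t)).comp measurable_fst)

lemma Qfun_abs_le (hrD : ∀ t, t ≤ T → ∀ s a, |r t s a| ≤ D) (hD0 : 0 ≤ D)
    {t : ℕ} (ht : t ≤ T) (s : S) (a : A) : |Qfun P π r T t s a| ≤ D + T * D := by
  have hP : |∫ s', Vk P π r T (T - (t+1)) s' ∂(P (s, a))| ≤ T * D := by
    have hb : ∀ s', |Vk P π r T (T - (t+1)) s'| ≤ T * D := by
      intro s'
      refine (Vk_abs_le P π hrD hD0 _ s').trans ?_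
      have h2 : ((T - (t+1) : ℕ) : ℝ) ≤ (T : ℝ) := by exact_mod_cast Nat.sub_le T (t+1)
      nlinarith
    have := norm_integral_le_of_norm_le_const (μ := P (s, a))
      (f := fun s' => Vk P π r T (T - (t+1)) s')
      (ae_of_all _ fun s' => by simpa [Real.norm_eq_abs] using hb s')
    simpa [Real.norm_eq_abs, measure_univ] using this
  exact (abs_add_le _ _).trans (add_le_add (hrD t ht s a) hP)

lemma Qfun_measurable (hmr : ∀ t, Measurable (Function.uncurry (r t))) (t : ℕ) :
    Measurable (Function.uncurry (Qfun P π r T t)) :=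
  (hmr t).add (meas_integral_P P (Vk_measurable P π hmr _))

lemma Adv_abs_le (hrD : ∀ t, t ≤ T → ∀ s a, |r t s a| ≤ D) (hD0 : 0 ≤ D)
    {t : ℕ} (ht : t ≤ T) (s : S) (a : A) : |Adv P π r T t s a| ≤ 2 * (D + T * D) := by
  have hQ := Qfun_abs_le P π hrD hD0 ht s a
  have hV : |Vfun P π r T t s| ≤ T * D := Vfun_abs_le P π hrD hD0 t s
  have h3 : |Adv P π r T t s a| ≤ |Qfun P π r T t s a| + |Vfun P π r T t s| := by
    rw [Adv, sub_eq_add_neg]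
    exact (abs_add_le _ _).trans (by rw [abs_neg])
  have h4 : 0 ≤ T * D := by positivity
  linarith

lemma Vfun_T_eq (s : S) : Vfun P π r T T s = 0 := by
  simp [Vfun, Nat.sub_self, Vk]

lemma r_eq_Adv (t : ℕ) (s : S) (a : A) :
    r t s a = Adv P π r T t s a + Vfun P π r T t s
      - ∫ s', Vfun P π r T (t+1) s' ∂(P (s, a)) := by
  simp only [Adv, Qfun, Vfun]
  ring

lemma Vfun_eq_integral {t : ℕ} (ht : t < T) (s : S) :
    Vfun P π r T t s = ∫ a, Qfun P π r T t s a ∂((π t) s) := by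
  have hk : T - t = T - (t+1) + 1 := by omega
  have hidx : T - (T - (t+1) + 1) = t := by omega
  simp only [Vfun, Qfun, hk, Vk, hidx]

lemma integral_Adv_self (hmr : ∀ t, Measurable (Function.uncurry (r t)))
    (hrD : ∀ t, t ≤ T → ∀ s a, |r t s a| ≤ D) (hD0 : 0 ≤ D)
    {t : ℕ} (ht : t < T) (s : S) :
    ∫ a, Adv P π r T t s a ∂((π t) s) = 0 := by
  have hQm : Measurable fun a => Qfun P π r T t s a :=
    (Qfun_measurable P π hmr t).comp measurable_prodMk_left
  have hQb : ∀ a, |Qfun P π r T t s a| ≤ D + T * D := Qfun_abs_le P π hrD hD0 ht.le s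
  have heq : (fun a => Adv P π r T t s a)
      = fun a => Qfun P π r T t s a - Vfun P π r T t s := rfl
  rw [heq, integral_sub (integrable_of_bdd hQm.aestronglyMeasurable hQb)
    (integrable_const _), integral_const, probReal_univ]
  rw [← Vfun_eq_integral P π ht s]
  simp

lemma return_eq (ρ₁ : Measure S) [IsProbabilityMeasure ρ₁]
    (hmr : ∀ t, Measurable (Function.uncurry (r t)))
    (hrD : ∀ t, t ≤ T → ∀ s a, |r t s a| ≤ D) (hD0 : 0 ≤ D)
    (p q : ℕ → Kernel S A) [∀ t, IsMarkovKernel (p t)] [∀ t, IsMarkovKernel (q t)] :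
    policyReturn ρ₁ P r T p =
      (∑ t ∈ Finset.range T,
        ∫ s, (∫ a, Adv P q r T t s a ∂((p t) s)) ∂(stateDist ρ₁ P p t))
        + ∫ s, Vfun P q r T 0 s ∂ρ₁ := by
  have hstep : ∀ t ∈ Finset.range T,
      ∫ s, (∫ a, r t s a ∂((p t) s)) ∂(stateDist ρ₁ P p t)
        = (∫ s, (∫ a, Adv P q r T t s a ∂((p t) s)) ∂(stateDist ρ₁ P p t))
          + ((∫ s, Vfun P q r T t s ∂(stateDist ρ₁ P p t))
             - (∫ s, Vfun P q r T (t+1) s ∂(stateDist ρ₁ P p (t+1)))) := by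
    intro t htmem
    have ht : t < T := Finset.mem_range.mp htmem
    haveI hprob : IsProbabilityMeasure (stateDist ρ₁ P p t) := isProb_stateDist P p ρ₁ t
    have hAdvm := Adv_measurable P q (T := T) hmr t
    have hAdvb : ∀ s a, |Adv P q r T t s a| ≤ 2*(D + T*D) :=
      fun s a => Adv_abs_le P q hrD hD0 ht.le s a
    have hVm1 := Vfun_measurable P q (T := T) hmr (t+1)
    have hVb1 : ∀ s', |Vfun P q r T (t+1) s'| ≤ T*D := Vfun_abs_le P q hrD hD0 (t+1)
    have hPVm : Measurable fun sa : S × A => ∫ s', Vfun P q r T (t+1) s' ∂(P sa) :=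
      meas_integral_P P hVm1
    have hPVb : ∀ (sa : S × A), |∫ s', Vfun P q r T (t+1) s' ∂(P sa)| ≤ T*D := by
      intro sa
      have := norm_integral_le_of_norm_le_const (μ := P sa)
        (f := fun s' => Vfun P q r T (t+1) s')
        (ae_of_all _ fun s' => by simpa [Real.norm_eq_abs] using hVb1 s')
      simpa [Real.norm_eq_abs, measure_univ] using this
    have hinner : ∀ s, ∫ a, r t s a ∂((p t) s)
        = (∫ a, Adv P q r T t s a ∂((p t) s)) + (Vfun P q r T t s
          - ∫ a, (∫ s', Vfun P q r T (t+1) s' ∂(P (s, a))) ∂((p t) s)) := by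
      intro s
      have hAint : Integrable (fun a => Adv P q r T t s a) ((p t) s) :=
        integrable_of_bdd (hAdvm.comp measurable_prodMk_left).aestronglyMeasurable
          (fun a => hAdvb s a)
      have hPVint : Integrable (fun a => ∫ s', Vfun P q r T (t+1) s' ∂(P (s, a))) ((p t) s) :=
        integrable_of_bdd (hPVm.comp measurable_prodMk_left).aestronglyMeasurable
          (fun a => hPVb (s, a))
      have hre : (fun a => r t s a)
          = fun a => Adv P q r T t s a + (Vfun P q r T t s
              - ∫ s', Vfun P q r T (t+1) s' ∂(P (s, a))) := by
        funext a
        have := r_eq_Adv P q (r := r) (T := T) t s a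
        linarith
      have hsubint : Integrable (fun a => Vfun P q r T t s
          - ∫ s', Vfun P q r T (t+1) s' ∂(P (s, a))) ((p t) s) :=
        (integrable_const _).sub hPVint
      rw [hre, integral_add hAint hsubint,
        integral_sub (integrable_const _) hPVint, integral_const, probReal_univ]
      simp
    have hftm : Measurable fun s => ∫ a, Adv P q r T t s a ∂((p t) s) :=
      meas_integral_kernel (κ := p t) hAdvm
    have hftb : ∀ s, |∫ a, Adv P q r T t s a ∂((p t) s)| ≤ 2*(D+T*D) := by
      intro s
      have := norm_integral_le_of_norm_le_const (μ := (p t) s)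
        (f := fun a => Adv P q r T t s a)
        (ae_of_all _ fun a => by simpa [Real.norm_eq_abs] using hAdvb s a)
      simpa [Real.norm_eq_abs, measure_univ] using this
    have hVm0 := Vfun_measurable P q (T := T) hmr t
    have hVb0 := Vfun_abs_le P q hrD hD0 t
    have hPVsm : Measurable fun s =>
        ∫ a, (∫ s', Vfun P q r T (t+1) s' ∂(P (s, a))) ∂((p t) s) :=
      meas_integral_kernel (κ := p t) hPVm
    have hPVsb : ∀ s, |∫ a, (∫ s', Vfun P q r T (t+1) s' ∂(P (s, a))) ∂((p t) s)| ≤ T*D := by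
      intro s
      have := norm_integral_le_of_norm_le_const (μ := (p t) s)
        (f := fun a => ∫ s', Vfun P q r T (t+1) s' ∂(P (s, a)))
        (ae_of_all _ fun a => by simpa [Real.norm_eq_abs] using hPVb (s, a))
      simpa [Real.norm_eq_abs, measure_univ] using this
    have houter : ∫ s, (∫ a, r t s a ∂((p t) s)) ∂(stateDist ρ₁ P p t)
        = (∫ s, (∫ a, Adv P q r T t s a ∂((p t) s)) ∂(stateDist ρ₁ P p t))
          + ((∫ s, Vfun P q r T t s ∂(stateDist ρ₁ P p t))
            - ∫ s, (∫ a, (∫ s', Vfun P q r T (t+1) s' ∂(P (s, a))) ∂((p t) s))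
                ∂(stateDist ρ₁ P p t)) := by
      calc ∫ s, (∫ a, r t s a ∂((p t) s)) ∂(stateDist ρ₁ P p t)
          = ∫ s, ((∫ a, Adv P q r T t s a ∂((p t) s)) + (Vfun P q r T t s
              - ∫ a, (∫ s', Vfun P q r T (t+1) s' ∂(P (s, a))) ∂((p t) s)))
              ∂(stateDist ρ₁ P p t) := integral_congr_ae (ae_of_all _ hinner)
        _ = _ := by
            have hftint : Integrable (fun s => ∫ a, Adv P q r T t s a ∂((p t) s))
                (stateDist ρ₁ P p t) := integrable_of_bdd hftm.aestronglyMeasurable hftb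
            have hVint0 : Integrable (fun s => Vfun P q r T t s) (stateDist ρ₁ P p t) :=
              integrable_of_bdd hVm0.aestronglyMeasurable hVb0
            have hPVsint : Integrable (fun s =>
                ∫ a, (∫ s', Vfun P q r T (t+1) s' ∂(P (s, a))) ∂((p t) s))
                (stateDist ρ₁ P p t) :=
              integrable_of_bdd hPVsm.aestronglyMeasurable hPVsb
            have hsub2 : Integrable (fun s => Vfun P q r T t s
                - ∫ a, (∫ s', Vfun P q r T (t+1) s' ∂(P (s, a))) ∂((p t) s))
                (stateDist ρ₁ P p t) := hVint0.sub hPVsint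
            rw [integral_add hftint hsub2, integral_sub hVint0 hPVsint]
    have hpush : ∫ s, (∫ a, (∫ s', Vfun P q r T (t+1) s' ∂(P (s, a))) ∂((p t) s))
        ∂(stateDist ρ₁ P p t)
        = ∫ s, Vfun P q r T (t+1) s ∂(stateDist ρ₁ P p (t+1)) := by
      rw [stateDist_succ P p ρ₁ t]
      rw [integral_bind_bdd (Kernel.measurable (stepK P p t)) (fun s => inferInstance)
        (Vfun_measurable P q (T := T) hmr (t+1)) (Vfun_abs_le P q hrD hD0 (t+1))]
      refine integral_congr_ae (ae_of_all _ fun s => ?_)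
      show (∫ a, (∫ s', Vfun P q r T (t+1) s' ∂(P (s, a))) ∂((p t) s))
          = ∫ z, Vfun P q r T (t+1) z ∂((stepK P p t) s)
      rw [stepK_apply P p t s]
      have hm1 : Measurable (fun a : A => P (s, a)) :=
        P.measurable.comp measurable_prodMk_left
      rw [integral_bind_bdd hm1
        (fun a => inferInstance) (Vfun_measurable P q (T := T) hmr (t+1)) (Vfun_abs_le P q hrD hD0 (t+1))]
    rw [houter, hpush]
  have hsum : policyReturn ρ₁ P r T p
      = ∑ t ∈ Finset.range T,
          ((∫ s, (∫ a, Adv P q r T t s a ∂((p t) s)) ∂(stateDist ρ₁ P p t))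
          + ((∫ s, Vfun P q r T t s ∂(stateDist ρ₁ P p t))
             - (∫ s, Vfun P q r T (t+1) s ∂(stateDist ρ₁ P p (t+1))))) :=
    Finset.sum_congr rfl hstep
  rw [hsum, Finset.sum_add_distrib,
    Finset.sum_range_sub' (fun t => ∫ s, Vfun P q r T t s ∂(stateDist ρ₁ P p t)) T]
  have hT0 : ∫ s, Vfun P q r T T s ∂(stateDist ρ₁ P p T) = 0 := by
    simp [Vfun_T_eq P q]
  rw [hT0]
  have h00 : stateDist ρ₁ P p 0 = ρ₁ := rfl
  rw [h00]
  ring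

end MDPSec



lemma klDiv_of_cond {X : Type*} [MeasurableSpace X] {μ ν : Measure X}
    (h : μ ≪ ν ∧ Integrable (llr μ ν) μ) :
    klDiv μ ν = ENNReal.ofReal (∫ x, llr μ ν x ∂μ) := by
  unfold klDiv
  exact if_pos h

lemma klDiv_of_not_cond {X : Type*} [MeasurableSpace X] {μ ν : Measure X}
    (h : ¬(μ ≪ ν ∧ Integrable (llr μ ν) μ)) :
    klDiv μ ν = ⊤ := by
  unfold klDiv
  exact if_neg h

/-- **Lemma 2**: for any two policies `p` and `q`, with `ε_t = KL(ρ_t^p ‖ ρ_t^q)` assumed finite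
and `δ_t = sup_s |E_{a ∼ p_t(·|s)}[A_t^q(s,a)]|`,
`J(p) − J(q) ≥ Σ_t E_{s ∼ ρ_t^q, a ∼ p_t(·|s)}[A_t^q(s,a)] − 2 Σ_t δ_t √(ε_t/2)`. -/
theorem perf_diff_kl_bound
    (ρ₁ : Measure S) [IsProbabilityMeasure ρ₁]
    (P : Kernel (S × A) S) [IsMarkovKernel P]
    (T : ℕ) (r : ℕ → S → A → ℝ)
    (hr_meas : ∀ t, Measurable (Function.uncurry (r t)))
    (hr_bdd : ∀ t, ∃ C : ℝ, ∀ s a, |r t s a| ≤ C)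
    (p q : ℕ → Kernel S A) [∀ t, IsMarkovKernel (p t)] [∀ t, IsMarkovKernel (q t)]
    (hε : ∀ t ∈ Finset.range T, klDiv (stateDist ρ₁ P p t) (stateDist ρ₁ P q t) ≠ ⊤) :
    policyReturn ρ₁ P r T p - policyReturn ρ₁ P r T q ≥
      (∑ t ∈ Finset.range T,
        ∫ s, ∫ a, Adv P q r T t s a ∂(p t s) ∂(stateDist ρ₁ P q t)) -
      2 * ∑ t ∈ Finset.range T,
        (⨆ s : S, |∫ a, Adv P q r T t s a ∂(p t s)|) *
          Real.sqrt ((klDiv (stateDist ρ₁ P p t) (stateDist ρ₁ P q t)).toReal / 2) := by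
  classical
  haveI hS : Nonempty S := by
    by_contra h
    rw [not_nonempty_iff] at h
    have h2 := measure_univ (μ := ρ₁)
    rw [Set.univ_eq_empty_iff.mpr h, measure_empty] at h2
    simp at h2
  -- a uniform bound on the rewards for time-steps up to `T`
  set C : ℕ → ℝ := fun t => Classical.choose (hr_bdd t) with hCdef
  have hCspec : ∀ t s a, |r t s a| ≤ C t := fun t => Classical.choose_spec (hr_bdd t)
  set D : ℝ := ∑ t' ∈ Finset.range (T+1), |C t'| with hDdef
  have hD0 : 0 ≤ D := Finset.sum_nonneg fun _ _ => abs_nonneg _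
  have hrD : ∀ t, t ≤ T → ∀ s a, |r t s a| ≤ D := by
    intro t ht s a
    refine (hCspec t s a).trans ((le_abs_self _).trans ?_)
    exact Finset.single_le_sum (fun i _ => abs_nonneg (C i))
      (Finset.mem_range.mpr (by omega))
  -- performance difference identity
  have hJp := return_eq P ρ₁ hr_meas hrD hD0 p q
  have hJq := return_eq P ρ₁ hr_meas hrD hD0 q q
  have hq0 : ∀ t ∈ Finset.range T,
      ∫ s, (∫ a, Adv P q r T t s a ∂((q t) s)) ∂(stateDist ρ₁ P q t) = 0 := by
    intro t htm
    have ht := Finset.mem_range.mp htm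
    have hz : ∀ s, (∫ a, Adv P q r T t s a ∂((q t) s)) = 0 := fun s =>
      integral_Adv_self P q hr_meas hrD hD0 ht s
    rw [integral_congr_ae (ae_of_all _ hz)]
    simp
  have hdiff : policyReturn ρ₁ P r T p - policyReturn ρ₁ P r T q
      = ∑ t ∈ Finset.range T,
          ∫ s, (∫ a, Adv P q r T t s a ∂((p t) s)) ∂(stateDist ρ₁ P p t) := by
    rw [hJp, hJq, Finset.sum_eq_zero hq0]
    ring
  rw [ge_iff_le, hdiff]
  -- per-time-step comparison
  have hterm : ∀ t ∈ Finset.range T,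
      (∫ s, (∫ a, Adv P q r T t s a ∂((p t) s)) ∂(stateDist ρ₁ P q t))
        - 2 * ((⨆ s : S, |∫ a, Adv P q r T t s a ∂((p t) s)|)
            * Real.sqrt ((klDiv (stateDist ρ₁ P p t) (stateDist ρ₁ P q t)).toReal / 2))
      ≤ ∫ s, (∫ a, Adv P q r T t s a ∂((p t) s)) ∂(stateDist ρ₁ P p t) := by
    intro t htm
    have ht := Finset.mem_range.mp htm
    haveI h1 : IsProbabilityMeasure (stateDist ρ₁ P p t) := isProb_stateDist P p ρ₁ t
    haveI h2 : IsProbabilityMeasure (stateDist ρ₁ P q t) := isProb_stateDist P q ρ₁ t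
    have hcond : (stateDist ρ₁ P p t) ≪ (stateDist ρ₁ P q t)
        ∧ Integrable (llr (stateDist ρ₁ P p t) (stateDist ρ₁ P q t)) (stateDist ρ₁ P p t) := by
      by_contra hc
      exact hε t htm (by rw [klDiv_of_not_cond hc])
    obtain ⟨hac, hint⟩ := hcond
    have hK0 := (pinsker_core _ _ hac hint).1
    have hKeq : (klDiv (stateDist ρ₁ P p t) (stateDist ρ₁ P q t)).toReal
        = ∫ x, llr (stateDist ρ₁ P p t) (stateDist ρ₁ P q t) x ∂(stateDist ρ₁ P p t) := by
      rw [klDiv_of_cond ⟨hac, hint⟩, ENNReal.toReal_ofReal hK0]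
    have hftm : Measurable fun s => ∫ a, Adv P q r T t s a ∂((p t) s) :=
      meas_integral_kernel (κ := p t) (Adv_measurable P q (T := T) hr_meas t)
    have hftb : ∀ s, |∫ a, Adv P q r T t s a ∂((p t) s)| ≤ 2*(D + T*D) := by
      intro s
      have := norm_integral_le_of_norm_le_const (μ := (p t) s)
        (f := fun a => Adv P q r T t s a)
        (ae_of_all _ fun a => by
          simpa [Real.norm_eq_abs] using Adv_abs_le P q hrD hD0 ht.le s a)
      simpa [Real.norm_eq_abs, measure_univ] using this
    have hbdd : BddAbove (Set.range fun s => |∫ a, Adv P q r T t s a ∂((p t) s)|) := by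
      refine ⟨2*(D+T*D), ?_⟩
      rintro _ ⟨s, rfl⟩
      exact hftb s
    have hδle : ∀ s, |∫ a, Adv P q r T t s a ∂((p t) s)|
        ≤ ⨆ s : S, |∫ a, Adv P q r T t s a ∂((p t) s)| := fun s => le_ciSup hbdd s
    have hδ0 : 0 ≤ ⨆ s : S, |∫ a, Adv P q r T t s a ∂((p t) s)| :=
      le_trans (abs_nonneg _) (hδle (Classical.arbitrary S))
    have habs := abs_integral_sub_le (stateDist ρ₁ P p t) (stateDist ρ₁ P q t) hac hint
      hftm hδle hδ0
    have hsqrt : Real.sqrt (2 * ∫ x, llr (stateDist ρ₁ P p t) (stateDist ρ₁ P q t) x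
          ∂(stateDist ρ₁ P p t))
        = 2 * Real.sqrt ((klDiv (stateDist ρ₁ P p t) (stateDist ρ₁ P q t)).toReal / 2) := by
      rw [hKeq]
      rw [show (2:ℝ) * (∫ x, llr (stateDist ρ₁ P p t) (stateDist ρ₁ P q t) x
          ∂(stateDist ρ₁ P p t))
        = 2^2 * ((∫ x, llr (stateDist ρ₁ P p t) (stateDist ρ₁ P q t) x
          ∂(stateDist ρ₁ P p t)) / 2) by ring]
      rw [Real.sqrt_mul (by norm_num : (0:ℝ) ≤ 2^2), Real.sqrt_sq (by norm_num : (0:ℝ) ≤ 2)]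
    rw [hsqrt] at habs
    have hpair := abs_le.mp habs
    have := hpair.1
    nlinarith [this]
  calc (∑ t ∈ Finset.range T,
        ∫ s, (∫ a, Adv P q r T t s a ∂((p t) s)) ∂(stateDist ρ₁ P q t))
      - 2 * ∑ t ∈ Finset.range T,
          ((⨆ s : S, |∫ a, Adv P q r T t s a ∂((p t) s)|)
            * Real.sqrt ((klDiv (stateDist ρ₁ P p t) (stateDist ρ₁ P q t)).toReal / 2))
      = ∑ t ∈ Finset.range T,
          ((∫ s, (∫ a, Adv P q r T t s a ∂((p t) s)) ∂(stateDist ρ₁ P q t))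
            - 2 * ((⨆ s : S, |∫ a, Adv P q r T t s a ∂((p t) s)|)
              * Real.sqrt ((klDiv (stateDist ρ₁ P p t)
                  (stateDist ρ₁ P q t)).toReal / 2))) := by
        rw [Finset.sum_sub_distrib, Finset.mul_sum]
    _ ≤ ∑ t ∈ Finset.range T,
          ∫ s, (∫ a, Adv P q r T t s a ∂((p t) s)) ∂(stateDist ρ₁ P p t) :=
        Finset.sum_le_sum hterm

end MDP
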